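/- For every r₁ > 0, the quantity α_{r₁} = (1/(π·r₁)) · ∫₀^π ln(e^{r₁}·cos²θ + e^{−r₁}·sin²θ) dθ satisfies 0 < α_{r₁} < 1. -/

import Mathlib

open Real

/-- The linear rate of escape of the step-`r₁` random walk on the hyperbolic plane:
`α_{r₁} = (1/(π·r₁)) · ∫₀^π ln(e^{r₁}·cos²θ + e^{−r₁}·sin²θ) dθ`. -/
noncomputable def alphaRate (r₁ : ℝ) : ℝ :=
  (1 / (π * r₁)) *
    ∫ θ in (0:ℝ)..π, Real.log (Real.exp r₁ * Real.cos θ ^ 2 + Real.exp (-r₁) * Real.sin θ ^ 2)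

lemma pos_aux (r₁ θ : ℝ) :
    0 < Real.exp r₁ * Real.cos θ ^ 2 + Real.exp (-r₁) * Real.sin θ ^ 2 := by
  rcases eq_or_ne (Real.cos θ) 0 with h | h
  · have hs : Real.sin θ ^ 2 = 1 := by
      have := Real.sin_sq_add_cos_sq θ; rw [h] at this; nlinarith
    rw [h, hs]; positivity
  · have : 0 < Real.cos θ ^ 2 := by positivity
    nlinarith [Real.exp_pos r₁, Real.exp_pos (-r₁), sq_nonneg (Real.sin θ)]

/-- For every `r₁ > 0`, the rate of escape satisfies `0 < α_{r₁} < 1`. -/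
theorem alphaRate_mem_Ioo (r₁ : ℝ) (hr : 0 < r₁) : alphaRate r₁ ∈ Set.Ioo (0:ℝ) 1 := by
  have hπ : 0 < π := Real.pi_pos
  have hpr : 0 < π * r₁ := mul_pos hπ hr
  set f : ℝ → ℝ := fun θ =>
    Real.log (Real.exp r₁ * Real.cos θ ^ 2 + Real.exp (-r₁) * Real.sin θ ^ 2) with hf
  have hcont : Continuous f :=
    Continuous.log (by fun_prop) fun x => (pos_aux r₁ x).ne' 
  -- upper bound on integral: f θ ≤ r₁, strict at π/2
  have hupper : (∫ θ in (0:ℝ)..π, f θ) < ∫ _ in (0:ℝ)..π, r₁ := by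
    apply intervalIntegral.integral_lt_integral_of_continuousOn_of_le_of_exists_lt hπ
      hcont.continuousOn continuousOn_const
    · intro x _
      have hle : Real.exp r₁ * Real.cos x ^ 2 + Real.exp (-r₁) * Real.sin x ^ 2 ≤ Real.exp r₁ := by
        have h1 : Real.exp (-r₁) ≤ Real.exp r₁ := Real.exp_le_exp.2 (by linarith)
        have h2 : Real.exp (-r₁) * Real.sin x ^ 2 ≤ Real.exp r₁ * Real.sin x ^ 2 :=
          mul_le_mul_of_nonneg_right h1 (sq_nonneg _)
        have h3 : Real.exp r₁ * Real.cos x ^ 2 + Real.exp r₁ * Real.sin x ^ 2 = Real.exp r₁ := by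
          rw [← mul_add, Real.cos_sq_add_sin_sq, mul_one]
        linarith
      calc f x ≤ Real.log (Real.exp r₁) := Real.log_le_log (pos_aux r₁ x) hle
        _ = r₁ := Real.log_exp r₁
    · refine ⟨π / 2, ⟨by positivity, by linarith⟩, ?_⟩
      simp only [hf, Real.cos_pi_div_two, Real.sin_pi_div_two]
      norm_num [Real.log_exp]
      linarith
  -- lower bound: f θ ≥ r₁ * (cos² - sin²), strict at π/4
  have hlowpt : ∀ x : ℝ, r₁ * (Real.cos x ^ 2 - Real.sin x ^ 2) ≤ f x := by
    intro x
    have hgm := Real.geom_mean_le_arith_mean2_weighted (sq_nonneg (Real.cos x))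
      (sq_nonneg (Real.sin x)) (Real.exp_pos r₁).le (Real.exp_pos (-r₁)).le
      (by rw [add_comm]; exact Real.sin_sq_add_cos_sq x)
    have hrw : Real.exp r₁ ^ (Real.cos x ^ 2) * Real.exp (-r₁) ^ (Real.sin x ^ 2)
        = Real.exp (r₁ * (Real.cos x ^ 2 - Real.sin x ^ 2)) := by
      rw [← Real.exp_mul, ← Real.exp_mul, ← Real.exp_add]
      ring_nf
    rw [hrw] at hgm
    calc r₁ * (Real.cos x ^ 2 - Real.sin x ^ 2)
        = Real.log (Real.exp (r₁ * (Real.cos x ^ 2 - Real.sin x ^ 2))) := (Real.log_exp _).symm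
      _ ≤ f x := Real.log_le_log (Real.exp_pos _) (hgm.trans_eq (by ring))
  have hlower : (∫ θ in (0:ℝ)..π, r₁ * (Real.cos θ ^ 2 - Real.sin θ ^ 2)) <
      ∫ θ in (0:ℝ)..π, f θ := by
    apply intervalIntegral.integral_lt_integral_of_continuousOn_of_le_of_exists_lt hπ
      (by fun_prop) hcont.continuousOn (fun x _ => hlowpt x)
    refine ⟨π / 4, ⟨by positivity, by linarith [Real.pi_pos]⟩, ?_⟩
    have hc : Real.cos (π / 4) ^ 2 = 1 / 2 := by
      rw [Real.cos_pi_div_four]; rw [div_pow]; norm_num [Real.sq_sqrt]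
    have hs : Real.sin (π / 4) ^ 2 = 1 / 2 := by
      rw [Real.sin_pi_div_four]; rw [div_pow]; norm_num [Real.sq_sqrt]
    simp only [hf, hc, hs]
    have h1 : r₁ * ((1:ℝ)/2 - 1/2) = 0 := by ring
    rw [h1]
    apply Real.log_pos
    have hne : Real.exp (-r₁) < Real.exp r₁ := Real.exp_lt_exp.2 (by linarith)
    have hprod : Real.exp r₁ * Real.exp (-r₁) = 1 := by
      rw [← Real.exp_add]; simp
    nlinarith [mul_pos (sub_pos.2 hne) (sub_pos.2 hne), Real.exp_pos r₁, Real.exp_pos (-r₁)]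
  -- compute both comparison integrals
  have hzero : (∫ θ in (0:ℝ)..π, r₁ * (Real.cos θ ^ 2 - Real.sin θ ^ 2)) = 0 := by
    have : (∫ θ in (0:ℝ)..π, r₁ * (Real.cos θ ^ 2 - Real.sin θ ^ 2))
        = r₁ * ((∫ θ in (0:ℝ)..π, Real.cos θ ^ 2) - ∫ θ in (0:ℝ)..π, Real.sin θ ^ 2) := by
      rw [← intervalIntegral.integral_sub (f := fun θ => Real.cos θ ^ 2) (g := fun θ => Real.sin θ ^ 2) ((Real.continuous_cos.pow 2).intervalIntegrable 0 π) ((Real.continuous_sin.pow 2).intervalIntegrable 0 π),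
        ← intervalIntegral.integral_const_mul]
    rw [this, integral_cos_sq, integral_sin_sq]
    simp
  have hconst : (∫ _ in (0:ℝ)..π, r₁) = π * r₁ := by simp [mul_comm]
  rw [hzero] at hlower
  rw [hconst] at hupper
  constructor
  · exact mul_pos (by positivity) hlower
  · rw [alphaRate, div_mul_eq_mul_div, one_mul, div_lt_one hpr]
    exact hupper
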